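/- There exists a piecewise linear unavoidable section in 𝕋³ = ℝ³/ℤ³. -/

import Mathlib

open Module Set

noncomputable section

/-- The integer lattice `ℤ³` as an additive subgroup of `ℝ³`. -/
def intLat3 : AddSubgroup (Fin 3 → ℝ) :=
  AddSubgroup.pi Set.univ fun _ => AddSubgroup.zmultiples (1 : ℝ)

/-- The torus `𝕋³ = ℝ³ / ℤ³`. -/
abbrev Torus3 := (Fin 3 → ℝ) ⧸ intLat3

/-- The canonical projection `π : ℝ³ → 𝕋³`. -/
def tproj : (Fin 3 → ℝ) →+ Torus3 := QuotientAddGroup.mk' intLat3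

/-- A subspace of `ℝ³` is rational if it is spanned by vectors with rational
coordinates. -/
def IsRationalSubspace (Q : Submodule ℝ (Fin 3 → ℝ)) : Prop :=
  ∃ S : Set (Fin 3 → ℚ),
    Q = Submodule.span ℝ ((fun v : Fin 3 → ℚ => fun i => (v i : ℝ)) '' S)

/-- A *piecewise linear unavoidable section* in `𝕋³`: a finite union of pairwise
disjoint projections of closed line segments that meets every coset of every
2-dimensional rational subtorus. -/
def IsPLUnavoidableSection (S : Set Torus3) : Prop :=
  (∃ (ℓ : ℕ) (a b : Fin ℓ → (Fin 3 → ℝ)),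
    S = (⋃ i, tproj '' segment ℝ (a i) (b i)) ∧
    ∀ i j, i ≠ j →
      Disjoint (tproj '' segment ℝ (a i) (b i)) (tproj '' segment ℝ (a j) (b j))) ∧
  (∀ x : Fin 3 → ℝ, ∀ Q : Submodule ℝ (Fin 3 → ℝ),
    IsRationalSubspace Q → finrank ℝ Q = 2 →
      (S ∩ tproj '' ((fun q => x + q) '' (Q : Set (Fin 3 → ℝ)))).Nonempty)

/-- The base points of the three coordinate circles. -/
def secBase : Fin 3 → (Fin 3 → ℝ) := ![![0, 0, 0], ![0, 0, 1/2], ![1/2, 1/2, 0]]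

/-- The standard basis vectors. -/
def eVec (i : Fin 3) : Fin 3 → ℝ := Pi.single i 1

lemma tproj_eq_iff (p q : Fin 3 → ℝ) : tproj p = tproj q ↔ p - q ∈ intLat3 := by
  rw [tproj, QuotientAddGroup.mk'_eq_mk']
  constructor
  · rintro ⟨z, hz, rfl⟩
    simpa using (neg_mem hz)
  · intro h
    exact ⟨q - p, by simpa using (neg_mem h), by abel⟩

lemma mem_intLat3_iff (p : Fin 3 → ℝ) :
    p ∈ intLat3 ↔ ∀ k, ∃ m : ℤ, (m : ℝ) = p k := by
  rw [intLat3, AddSubgroup.mem_pi]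
  constructor
  · intro h k
    obtain ⟨m, hm⟩ := AddSubgroup.mem_zmultiples_iff.mp (h k trivial)
    exact ⟨m, by simpa using hm⟩
  · intro h k _
    obtain ⟨m, hm⟩ := h k
    exact AddSubgroup.mem_zmultiples_iff.mpr ⟨m, by simpa using hm⟩

lemma seg_param {i : Fin 3} {p : Fin 3 → ℝ}
    (hp : p ∈ segment ℝ (secBase i) (secBase i + eVec i)) :
    ∃ t ∈ Icc (0:ℝ) 1, p = secBase i + t • eVec i := by
  rw [segment_eq_image'] at hp
  obtain ⟨t, ht, rfl⟩ := hp
  exact ⟨t, ht, by rw [add_sub_cancel_left]⟩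

lemma not_half (m : ℤ) (v : ℝ) (hv : v = 1/2 ∨ v = -(1/2)) : (m : ℝ) ≠ v := by
  intro h
  rcases hv with hv | hv <;> rw [hv] at h
  · have h2 : (2 * m : ℤ) = 1 := by exact_mod_cast (by push_cast; linarith : ((2*m:ℤ):ℝ) = 1)
    omega
  · have h2 : (2 * m : ℤ) = -1 := by exact_mod_cast (by push_cast; linarith : ((2*m:ℤ):ℝ) = -1)
    omega

/-- **Piecewise linear unavoidable sections in `𝕋³` exist.** -/
theorem exists_PL_unavoidable_section : ∃ S : Set Torus3, IsPLUnavoidableSection S := by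
  refine ⟨⋃ i, tproj '' segment ℝ (secBase i) (secBase i + eVec i), ?_, ?_⟩
  · refine ⟨3, secBase, fun i => secBase i + eVec i, rfl, ?_⟩
    intro i j hij
    rw [Set.disjoint_left]
    rintro z ⟨p, hp, rfl⟩ ⟨q, hq, hzq⟩
    obtain ⟨s, -, rfl⟩ := seg_param hp
    obtain ⟨t, -, rfl⟩ := seg_param hq
    rw [tproj_eq_iff, mem_intLat3_iff] at hzq
    fin_cases i <;> fin_cases j <;> (try exact hij rfl)
    · -- i = 0, j = 1, use k = 2
      obtain ⟨m, hm⟩ := hzq 2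
      norm_num [secBase, eVec, Matrix.vecHead, Matrix.vecTail, Function.comp, Pi.smul_apply, smul_eq_mul, Pi.single_apply, Fin.ext_iff] at hm
      exact not_half m _ (by norm_num [Matrix.cons_val_two]) hm
    · -- i = 0, j = 2, use k = 1
      obtain ⟨m, hm⟩ := hzq 1
      norm_num [secBase, eVec, Matrix.vecHead, Matrix.vecTail, Function.comp, Pi.smul_apply, smul_eq_mul, Pi.single_apply, Fin.ext_iff] at hm
      exact not_half m _ (by norm_num) hm
    · -- i = 1, j = 0, use k = 2
      obtain ⟨m, hm⟩ := hzq 2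
      norm_num [secBase, eVec, Matrix.vecHead, Matrix.vecTail, Function.comp, Pi.smul_apply, smul_eq_mul, Pi.single_apply, Fin.ext_iff] at hm
      exact not_half m _ (by norm_num [Matrix.cons_val_two]) hm
    · -- i = 1, j = 2, use k = 0
      obtain ⟨m, hm⟩ := hzq 0
      norm_num [secBase, eVec, Matrix.vecHead, Matrix.vecTail, Function.comp, Pi.smul_apply, smul_eq_mul, Pi.single_apply, Fin.ext_iff] at hm
      exact not_half m _ (by norm_num) hm
    · -- i = 2, j = 0, use k = 1
      obtain ⟨m, hm⟩ := hzq 1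
      norm_num [secBase, eVec, Matrix.vecHead, Matrix.vecTail, Function.comp, Pi.smul_apply, smul_eq_mul, Pi.single_apply, Fin.ext_iff] at hm
      exact not_half m _ (by norm_num) hm
    · -- i = 2, j = 1, use k = 0
      obtain ⟨m, hm⟩ := hzq 0
      norm_num [secBase, eVec, Matrix.vecHead, Matrix.vecTail, Function.comp, Pi.smul_apply, smul_eq_mul, Pi.single_apply, Fin.ext_iff] at hm
      exact not_half m _ (by norm_num) hm
  · intro x Q _ hQ2
    have hex : ∃ i : Fin 3, eVec i ∉ Q := by
      by_contra h
      push_neg at h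
      have htop : Q = ⊤ := by
        rw [← top_le_iff, ← (Pi.basisFun ℝ (Fin 3)).span_eq, Submodule.span_le]
        rintro v ⟨i, rfl⟩
        simpa [eVec, Pi.basisFun_apply] using h i
      rw [htop] at hQ2
      simp [finrank_top] at hQ2
    obtain ⟨i, hi⟩ := hex
    set e : Fin 3 → ℝ := eVec i with he
    have hsup : Q ⊔ Submodule.span ℝ {e} = ⊤ := by
      have hlt : Q < Q ⊔ Submodule.span ℝ {e} := by
        rw [left_lt_sup]
        intro hle
        exact hi (hle (Submodule.mem_span_singleton_self e))
      have h3 : finrank ℝ (Fin 3 → ℝ) = 3 := by simp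
      have h1 := Submodule.finrank_lt_finrank_of_lt hlt
      have h2 := Submodule.finrank_le (Q ⊔ Submodule.span ℝ {e})
      exact Submodule.eq_top_of_finrank_eq (by omega)
    have hmem : secBase i - x ∈ Q ⊔ Submodule.span ℝ {e} := hsup ▸ Submodule.mem_top
    rw [Submodule.mem_sup] at hmem
    obtain ⟨q, hq, z, hz, hsum⟩ := hmem
    obtain ⟨t, rfl⟩ := Submodule.mem_span_singleton.mp hz
    set p : Fin 3 → ℝ := secBase i + (-t) • e with hpdef
    set p' : Fin 3 → ℝ := secBase i + Int.fract (-t) • e with hp'def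
    refine ⟨tproj p', ?_, ?_⟩
    · refine Set.mem_iUnion.mpr ⟨i, ⟨p', ?_, rfl⟩⟩
      rw [segment_eq_image']
      exact ⟨Int.fract (-t), ⟨Int.fract_nonneg _, (Int.fract_lt_one _).le⟩,
        by rw [add_sub_cancel_left]⟩
    · refine ⟨p, ⟨q, hq, ?_⟩, ?_⟩
      · show x + q = p
        rw [hpdef]
        have : x + q = secBase i + (-t) • e := by
          rw [neg_smul]
          linear_combination (norm := module) hsum
        exact this
      · rw [tproj_eq_iff, mem_intLat3_iff]
        intro k
        have hpp : (p - p') k = (-t - Int.fract (-t)) * e k := by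
          simp only [hpdef, hp'def, Pi.sub_apply, Pi.add_apply, Pi.smul_apply,
            smul_eq_mul, neg_mul]
          ring
        rw [hpp, Int.self_sub_fract]
        rcases eq_or_ne k i with rfl | hki
        · exact ⟨⌊-t⌋, by simp [he, eVec, Pi.single_apply]⟩
        · exact ⟨0, by simp [he, eVec, Pi.single_apply, if_neg hki]⟩

end
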